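/- Let $x^* \in \mathbb{R}^d$ be a unit vector, $\Gamma_{\mathrm{sym}} \in \mathbb{R}^{d\times d}$ symmetric, $X \in \mathbb{R}^{d\times d}$, and set $E = (\mathrm{Id} - x^* x^{*\top}) X$, $Z = x^* (X^\top x^*)^\top$ so that $X = Z + E$. Then $\langle E, (X X^\top - x^* x^{*\top} - \Gamma_{\mathrm{sym}}) X \rangle \ge -\|\Gamma_{\mathrm{sym}}\|_2 \|E\|_F^2 + \|E Z^\top\|_F^2 - \|\Gamma_{\mathrm{sym}}\|_2 \|E Z^\top\|_F \ge -\|\Gamma_{\mathrm{sym}}\|_2 \|E\|_F^2 - \frac{1}{4}\|\Gamma_{\mathrm{sym}}\|_2^2$, where $\langle A, B\rangle = \mathrm{tr}(A^\top B)$ and $\|\cdot\|_2$ is the spectral norm. -/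

import Mathlib

open Matrix MeasureTheory

noncomputable def frobSq {d : ℕ} (A : Matrix (Fin d) (Fin d) ℝ) : ℝ := ∑ i, ∑ j, (A i j) ^ 2

noncomputable def frobNorm {d : ℕ} (A : Matrix (Fin d) (Fin d) ℝ) : ℝ := Real.sqrt (frobSq A)

noncomputable def nsq {d : ℕ} (v : Fin d → ℝ) : ℝ := ∑ i, (v i) ^ 2

noncomputable def vnorm {d : ℕ} (v : Fin d → ℝ) : ℝ := Real.sqrt (nsq v)

noncomputable def specNorm {d : ℕ} (A : Matrix (Fin d) (Fin d) ℝ) : ℝ :=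
  ‖Matrix.toEuclideanCLM (𝕜 := ℝ) A‖

noncomputable def finner {d : ℕ} (A B : Matrix (Fin d) (Fin d) ℝ) : ℝ := Matrix.trace (Aᵀ * B)

lemma nsq_nonneg' {d : ℕ} (v : Fin d → ℝ) : 0 ≤ nsq v :=
  Finset.sum_nonneg fun _ _ => sq_nonneg _

lemma frobSq_nonneg' {d : ℕ} (A : Matrix (Fin d) (Fin d) ℝ) : 0 ≤ frobSq A :=
  Finset.sum_nonneg fun _ _ => Finset.sum_nonneg fun _ _ => sq_nonneg _

lemma vnorm_mul_self' {d : ℕ} (v : Fin d → ℝ) : vnorm v * vnorm v = nsq v :=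
  Real.mul_self_sqrt (nsq_nonneg' v)

lemma vnorm_eq' {d : ℕ} (v : Fin d → ℝ) :
    vnorm v = ‖(WithLp.equiv 2 (Fin d → ℝ)).symm v‖ := by
  rw [EuclideanSpace.norm_eq, vnorm, nsq]
  congr 1; apply Finset.sum_congr rfl; intro i _
  simp [WithLp.equiv_symm_apply, sq_abs]

lemma op_bound' {d : ℕ} (Γ : Matrix (Fin d) (Fin d) ℝ) (v : Fin d → ℝ) :
    vnorm (Γ *ᵥ v) ≤ specNorm Γ * vnorm v := by
  rw [vnorm_eq', vnorm_eq']
  have h : Γ *ᵥ v = Matrix.toLin' Γ v := rfl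
  rw [h]
  exact ContinuousLinearMap.le_opNorm (Matrix.toEuclideanCLM (𝕜 := ℝ) Γ) _

lemma cs_bound' {d : ℕ} (u v : Fin d → ℝ) :
    |u ⬝ᵥ v| ≤ vnorm u * vnorm v := by
  have h := abs_real_inner_le_norm ((WithLp.equiv 2 (Fin d → ℝ)).symm u)
    ((WithLp.equiv 2 (Fin d → ℝ)).symm v)
  rw [← vnorm_eq', ← vnorm_eq'] at h
  have hin : (inner ℝ ((WithLp.equiv 2 (Fin d → ℝ)).symm u)
      ((WithLp.equiv 2 (Fin d → ℝ)).symm v) : ℝ) = u ⬝ᵥ v := by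
    rw [PiLp.inner_apply]
    apply Finset.sum_congr rfl; intro i _
    simp [WithLp.equiv_symm_apply, RCLike.inner_apply, mul_comm]
  rwa [hin] at h

lemma mul_vecMulVec' {d : ℕ} (M : Matrix (Fin d) (Fin d) ℝ) (a b : Fin d → ℝ) :
    M * vecMulVec a b = vecMulVec (M *ᵥ a) b := by
  ext i j
  simp [Matrix.mul_apply, vecMulVec_apply, Matrix.mulVec, dotProduct,
    Finset.sum_mul, mul_assoc]

lemma trace_vecMulVec' {d : ℕ} (a b : Fin d → ℝ) :
    Matrix.trace (vecMulVec a b) = a ⬝ᵥ b := by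
  simp [Matrix.trace, Matrix.diag, vecMulVec_apply, dotProduct]

lemma frobSq_vecMulVec' {d : ℕ} (a b : Fin d → ℝ) :
    frobSq (vecMulVec a b) = nsq a * nsq b := by
  rw [frobSq, nsq, nsq, Finset.sum_mul_sum]
  apply Finset.sum_congr rfl; intro i _
  apply Finset.sum_congr rfl; intro j _
  simp [vecMulVec_apply]; ring

lemma frobSq_eq_trace' {d : ℕ} (A : Matrix (Fin d) (Fin d) ℝ) :
    frobSq A = Matrix.trace (Aᵀ * A) := by
  rw [frobSq, Matrix.trace, Finset.sum_comm]
  apply Finset.sum_congr rfl; intro j _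
  simp [Matrix.mul_apply, Matrix.diag, sq]

lemma trace_conj' {d : ℕ} (Γ E : Matrix (Fin d) (Fin d) ℝ) :
    Matrix.trace (Eᵀ * (Γ * E)) = ∑ j, (Γ *ᵥ fun i => E i j) ⬝ᵥ (fun i => E i j) := by
  simp only [Matrix.trace, Matrix.diag, Matrix.mul_apply, Matrix.mulVec,
    dotProduct, Matrix.transpose_apply]
  apply Finset.sum_congr rfl; intro j _
  apply Finset.sum_congr rfl; intro i _
  ring

lemma frobSq_cols' {d : ℕ} (E : Matrix (Fin d) (Fin d) ℝ) :
    frobSq E = ∑ j, nsq (fun i => E i j) := by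
  rw [frobSq, Finset.sum_comm]; rfl

lemma trace_gamma_Z' {d : ℕ} (Γ E : Matrix (Fin d) (Fin d) ℝ) (xs w : Fin d → ℝ) :
    Matrix.trace (Eᵀ * (Γ * vecMulVec xs w)) = (Γ *ᵥ xs) ⬝ᵥ (E *ᵥ w) := by
  rw [mul_vecMulVec', mul_vecMulVec', trace_vecMulVec', Matrix.mulVec_transpose,
    Matrix.dotProduct_mulVec]

theorem stmt_3 {d : ℕ} (xs : Fin d → ℝ) (hx : nsq xs = 1)
    (Γ : Matrix (Fin d) (Fin d) ℝ) (hΓ : Γᵀ = Γ)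
    (X : Matrix (Fin d) (Fin d) ℝ)
    (E Z : Matrix (Fin d) (Fin d) ℝ)
    (hE : E = (1 - Matrix.vecMulVec xs xs) * X)
    (hZ : Z = Matrix.vecMulVec xs (Xᵀ *ᵥ xs)) :
    finner E ((X * Xᵀ - Matrix.vecMulVec xs xs - Γ) * X) ≥
      -specNorm Γ * frobSq E + frobSq (E * Zᵀ) - specNorm Γ * frobNorm (E * Zᵀ) ∧
    -specNorm Γ * frobSq E + frobSq (E * Zᵀ) - specNorm Γ * frobNorm (E * Zᵀ) ≥
      -specNorm Γ * frobSq E - (1 / 4) * (specNorm Γ) ^ 2 := by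
  set s := specNorm Γ with hsdef
  have hs0 : 0 ≤ s := norm_nonneg _
  set Q := Matrix.vecMulVec xs xs with hQdef
  set w := Xᵀ *ᵥ xs with hwdef
  have hxsum : ∑ k, xs k ^ 2 = 1 := hx
  have hQQ : Q * Q = Q := by
    ext i j
    simp only [hQdef, Matrix.mul_apply, vecMulVec_apply]
    have : ∀ k, xs i * xs k * (xs k * xs j) = xs i * xs j * xs k ^ 2 := by
      intro k; ring
    rw [Finset.sum_congr rfl fun k _ => this k, ← Finset.mul_sum, hxsum, mul_one]
  have hQT : Qᵀ = Q := by
    ext i j; simp [hQdef, vecMulVec_apply, mul_comm]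
  have hZQ : Z = Q * X := by
    rw [hZ]
    ext i j
    simp only [hwdef, hQdef, Matrix.mul_apply, vecMulVec_apply, Matrix.mulVec,
      dotProduct, Matrix.transpose_apply, Finset.mul_sum]
    apply Finset.sum_congr rfl; intro k _; ring
  have hQE : Q * E = 0 := by
    rw [hE, ← mul_assoc, mul_sub, mul_one, hQQ, sub_self, zero_mul]
  have hEtQ : Eᵀ * Q = 0 := by
    rw [show Eᵀ * Q = (Qᵀ * E)ᵀ by rw [transpose_mul, transpose_transpose], hQT, hQE,
      transpose_zero]
  have hEtZ : Eᵀ * Z = 0 := by rw [hZQ, ← mul_assoc, hEtQ, zero_mul]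
  have hZtE : Zᵀ * E = 0 := by
    rw [show Zᵀ * E = (Eᵀ * Z)ᵀ by rw [transpose_mul, transpose_transpose], hEtZ,
      transpose_zero]
  have hXZE : X = Z + E := by
    rw [hE, hZQ, sub_mul, one_mul]; abel
  -- E * Zᵀ as rank one
  have hZtT : Zᵀ = vecMulVec w xs := by
    rw [hZ]; ext i j; simp [vecMulVec_apply, mul_comm]
  have hEZt : E * Zᵀ = vecMulVec (E *ᵥ w) xs := by
    rw [hZtT, mul_vecMulVec']
  have hvx : vnorm xs = 1 := by rw [vnorm, hx, Real.sqrt_one]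
  have hfrobEZ : frobSq (E * Zᵀ) = nsq (E *ᵥ w) := by
    rw [hEZt, frobSq_vecMulVec', hx, mul_one]
  have hfnEZ : frobNorm (E * Zᵀ) = vnorm (E *ᵥ w) := by
    rw [frobNorm, hfrobEZ]; rfl
  -- algebraic expansion
  have hEtX : Eᵀ * X = Eᵀ * E := by
    conv_lhs => rw [hXZE]
    rw [mul_add, hEtZ, zero_add]
  have hXtX : Xᵀ * X = Zᵀ * Z + Eᵀ * E := by
    conv_lhs => rw [hXZE]
    rw [transpose_add, add_mul, mul_add, mul_add, hEtZ, hZtE]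
    abel
  have hA : Eᵀ * (X * (Xᵀ * X)) = Eᵀ * E * (Zᵀ * Z) + Eᵀ * E * (Eᵀ * E) := by
    rw [← mul_assoc, hEtX, hXtX, mul_add]
  have h1 : Eᵀ * ((X * Xᵀ - Q - Γ) * X) =
      Eᵀ * (X * (Xᵀ * X)) - Eᵀ * (Q * X) - (Eᵀ * (Γ * E) + Eᵀ * (Γ * Z)) := by
    have hGX : Eᵀ * (Γ * E) + Eᵀ * (Γ * Z) = Eᵀ * (Γ * X) := by
      conv_rhs => rw [hXZE]
      rw [mul_add, mul_add]; abel
    rw [hGX]; noncomm_ring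
  have hQX0 : Eᵀ * (Q * X) = 0 := by rw [← mul_assoc, hEtQ, zero_mul]
  -- trace identities
  have h2 : Matrix.trace (Eᵀ * E * (Zᵀ * Z)) = frobSq (E * Zᵀ) := by
    rw [frobSq_eq_trace', transpose_mul, transpose_transpose,
      show Eᵀ * E * (Zᵀ * Z) = Eᵀ * (E * Zᵀ) * Z from by noncomm_ring,
      Matrix.trace_mul_comm,
      show Z * (Eᵀ * (E * Zᵀ)) = Z * Eᵀ * (E * Zᵀ) from by noncomm_ring]
  have h3 : Matrix.trace (Eᵀ * E * (Eᵀ * E)) = frobSq (Eᵀ * E) := by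
    rw [frobSq_eq_trace', transpose_mul, transpose_transpose]
  -- gamma bounds
  have hGE : |Matrix.trace (Eᵀ * (Γ * E))| ≤ s * frobSq E := by
    rw [_root_.trace_conj', frobSq_cols', Finset.mul_sum]
    refine (Finset.abs_sum_le_sum_abs _ _).trans (Finset.sum_le_sum fun j _ => ?_)
    calc |(Γ *ᵥ fun i => E i j) ⬝ᵥ fun i => E i j|
        ≤ vnorm (Γ *ᵥ fun i => E i j) * vnorm (fun i => E i j) := cs_bound' _ _
      _ ≤ s * vnorm (fun i => E i j) * vnorm (fun i => E i j) :=
          mul_le_mul_of_nonneg_right (op_bound' _ _) (Real.sqrt_nonneg _)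
      _ = s * nsq (fun i => E i j) := by rw [mul_assoc, vnorm_mul_self']
  have hGZ : |Matrix.trace (Eᵀ * (Γ * Z))| ≤ s * frobNorm (E * Zᵀ) := by
    rw [hfnEZ, hZ, trace_gamma_Z']
    calc |(Γ *ᵥ xs) ⬝ᵥ (E *ᵥ w)| ≤ vnorm (Γ *ᵥ xs) * vnorm (E *ᵥ w) := cs_bound' _ _
      _ ≤ s * vnorm xs * vnorm (E *ᵥ w) :=
          mul_le_mul_of_nonneg_right (op_bound' _ _) (Real.sqrt_nonneg _)
      _ = s * vnorm (E *ᵥ w) := by rw [hvx, mul_one]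
  -- assemble
  have hmain : finner E ((X * Xᵀ - Q - Γ) * X) =
      frobSq (E * Zᵀ) + frobSq (Eᵀ * E)
        - (Matrix.trace (Eᵀ * (Γ * E)) + Matrix.trace (Eᵀ * (Γ * Z))) := by
    rw [finner, h1, Matrix.trace_sub, Matrix.trace_sub, Matrix.trace_add, hA,
      Matrix.trace_add, h2, h3, hQX0, Matrix.trace_zero]
    ring
  have hfs : 0 ≤ frobSq (Eᵀ * E) := frobSq_nonneg' _
  have habs1 : Matrix.trace (Eᵀ * (Γ * E)) ≤ s * frobSq E := (le_abs_self _).trans hGE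
  have habs2 : Matrix.trace (Eᵀ * (Γ * Z)) ≤ s * frobNorm (E * Zᵀ) :=
    (le_abs_self _).trans hGZ
  constructor
  · rw [hmain]; linarith
  · have ht0 : 0 ≤ frobNorm (E * Zᵀ) := Real.sqrt_nonneg _
    have ht2 : frobNorm (E * Zᵀ) ^ 2 = frobSq (E * Zᵀ) := Real.sq_sqrt (frobSq_nonneg' _)
    nlinarith [sq_nonneg (frobNorm (E * Zᵀ) - s / 2)]
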